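/- Robust counterpart preserves feasibility (forward direction of Theorem on RC correctness): if (η, x, β, γ) is feasible for the robust counterpart — i.e., for all k: ∑_j Ḡ_{k,j} η_j + ∑_i (Γ_i β_{k,i} + ∑_{j: s(j)=i} γ_{k,i,j}) + ẋ_k = a_k with β_{k,i} + γ_{k,i,j} ≥ G̃_{k,j} η_j, all variables with required nonnegativity — then for every ξ in the budgeted box U (0 ≤ ξ ≤ 1, ∑_{j:s(j)=i} ξ_j ≤ Γ_i ∀i) one has ∑_j (Ḡ_{k,j} + ξ_j G̃_{k,j}) η_j ≤ a_k for all k with ẋ_k ≥ 0; i.e., η is robust feasible for the uncertain constraints. -/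
import Mathlib


/-- robust-counterpart feasibility implies robust feasibility: if
`(η, ẋ, β, γ)` satisfies the RC equalities and inequalities with the required
nonnegativity, then for every `ξ` in the multi-budget box `U` and every constraint
`k`, the uncertain inequality `∑_j (Ḡ_{k,j} + ξ_j G̃_{k,j}) η_j ≤ a_k` holds. -/
theorem stmt17 {K J I : Type*} [Fintype K] [Fintype J] [Fintype I] [DecidableEq I]
    (s : J → I) (Gbar Gtil : K → J → ℝ) (a : K → ℝ)
    (Γ : I → ℝ) (hΓ : ∀ i, 0 ≤ Γ i)
    (η : J → ℝ) (xdot : K → ℝ) (β : K → I → ℝ) (γ : K → I → J → ℝ)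
    (hxdot : ∀ k, 0 ≤ xdot k)
    (hβ : ∀ k i, 0 ≤ β k i)
    (hγ : ∀ k i j, s j = i → 0 ≤ γ k i j)
    (heq : ∀ k, (∑ j, Gbar k j * η j) +
      (∑ i, (Γ i * β k i + ∑ j ∈ Finset.univ.filter (fun j => s j = i), γ k i j)) +
      xdot k = a k)
    (hdual : ∀ k, ∀ j, β k (s j) + γ k (s j) j ≥ Gtil k j * η j) :
    ∀ ξ : J → ℝ, (∀ j, 0 ≤ ξ j ∧ ξ j ≤ 1) →
      (∀ i, (∑ j ∈ Finset.univ.filter (fun j => s j = i), ξ j) ≤ Γ i) →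
      ∀ k, ∑ j, (Gbar k j + ξ j * Gtil k j) * η j ≤ a k := by
  intro ξ hbox hbud k
  have key : ∑ j, ξ j * Gtil k j * η j ≤
      ∑ i, (Γ i * β k i + ∑ j ∈ Finset.univ.filter (fun j => s j = i), γ k i j) := by
    have h1 : ∑ j, ξ j * Gtil k j * η j ≤ ∑ j, (ξ j * β k (s j) + γ k (s j) j) := by
      apply Finset.sum_le_sum
      intro j _
      have hξ := hbox j
      have hd := hdual k j
      have hg : 0 ≤ γ k (s j) j := hγ k (s j) j rfl
      calc ξ j * Gtil k j * η j = ξ j * (Gtil k j * η j) := by ring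
        _ ≤ ξ j * (β k (s j) + γ k (s j) j) := by
              exact mul_le_mul_of_nonneg_left hd hξ.1
        _ = ξ j * β k (s j) + ξ j * γ k (s j) j := by ring
        _ ≤ ξ j * β k (s j) + γ k (s j) j := by
              have : ξ j * γ k (s j) j ≤ 1 * γ k (s j) j :=
                mul_le_mul_of_nonneg_right hξ.2 hg
              linarith
    have h2 : ∑ j, (ξ j * β k (s j) + γ k (s j) j) =
        ∑ i, ∑ j ∈ Finset.univ.filter (fun j => s j = i),
          (ξ j * β k (s j) + γ k (s j) j) :=
      (Finset.sum_fiberwise Finset.univ s (fun j => ξ j * β k (s j) + γ k (s j) j)).symm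
    refine h1.trans ?_
    rw [h2]
    apply Finset.sum_le_sum
    intro i _
    have hcongr : ∀ j ∈ Finset.univ.filter (fun j => s j = i),
        ξ j * β k (s j) + γ k (s j) j = ξ j * β k i + γ k i j := by
      intro j hj
      simp only [Finset.mem_filter] at hj
      rw [hj.2]
    rw [Finset.sum_congr rfl hcongr, Finset.sum_add_distrib, ← Finset.sum_mul]
    have : (∑ j ∈ Finset.univ.filter (fun j => s j = i), ξ j) * β k i ≤ Γ i * β k i :=
      mul_le_mul_of_nonneg_right (hbud i) (hβ k i)
    linarith
  have hsplit : ∑ j, (Gbar k j + ξ j * Gtil k j) * η j =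
      (∑ j, Gbar k j * η j) + ∑ j, ξ j * Gtil k j * η j := by
    rw [← Finset.sum_add_distrib]; apply Finset.sum_congr rfl; intro j _; ring
  have := heq k
  have hx := hxdot k
  linarith [hsplit, key]
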